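/- Let S = k[x_1,...,x_d] and let u_1,...,u_m, g_1,...,g_m ∈ S be nonzero with g_i monomials satisfying gcd(g_1,...,g_m) = 1, and suppose u_{j−1}·g_j = u_j·g_{j−1} for all j (indices mod m, so also u_m·g_1 = u_1·g_m). Then g_j divides u_j for every j, and setting u = u_1/g_1 one has u_j = u·g_j for all j. -/

import Mathlib

open MvPolynomial

private lemma wheel_mono_dvd_iff {K : Type*} [Field K] {σ : Type*} {s : σ →₀ ℕ}
    {p : MvPolynomial σ K} :
    monomial s (1 : K) ∣ p ↔ ∀ a ∈ p.support, s ≤ a := by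
  constructor
  · rintro ⟨q, rfl⟩ a ha
    rw [mem_support_iff, coeff_monomial_mul'] at ha
    by_contra h
    simp [h] at ha
  · intro h
    refine ⟨p.divMonomial s, ?_⟩
    ext a
    rw [coeff_monomial_mul']
    split_ifs with hle
    · rw [one_mul, coeff_divMonomial, add_tsub_cancel_of_le hle]
    · by_contra hne
      exact hle (h a (mem_support_iff.mpr hne))

private lemma wheel_inf_shift {K : Type*} [Field K] {σ : Type*} (i : σ)
    {p : MvPolynomial σ K} (s : σ →₀ ℕ) (h1 : p.support.Nonempty)
    (h2 : (p * monomial s (1 : K)).support.Nonempty) :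
    (p * monomial s (1 : K)).support.inf' h2 (fun a => a i)
      = p.support.inf' h1 (fun a => a i) + s i := by
  apply le_antisymm
  · obtain ⟨a0, ha0, hmin⟩ := Finset.exists_mem_eq_inf' h1 (fun a => a i)
    have hmem : a0 + s ∈ (p * monomial s (1 : K)).support := by
      rw [mem_support_iff, coeff_mul_monomial', if_pos le_add_self, add_tsub_cancel_right,
        mul_one]
      exact mem_support_iff.mp ha0
    have := Finset.inf'_le (fun a => a i) hmem
    rw [hmin]; exact this
  · apply Finset.le_inf'
    intro a ha
    rw [mem_support_iff, coeff_mul_monomial'] at ha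
    split_ifs at ha with hle
    · have hsub : a - s ∈ p.support := by
        rw [mem_support_iff]
        intro h0
        exact ha (by rw [h0, zero_mul])
      have h3 := Finset.inf'_le (s := p.support) (fun a => a i) hsub
      have h4 : s i ≤ a i := hle i
      have h5 : (a - s) i = a i - s i := Finsupp.tsub_apply a s i
      omega
    · exact absurd rfl ha

open Fin.CommRing in
private lemma wheel_cyclic_const {α : Type*} {m : ℕ} [NeZero m] (w : Fin m → α)
    (h : ∀ j, w (j - 1) = w j) (j j' : Fin m) : w j = w j' := by
  suffices H : ∀ k : ℕ, ∀ j : Fin m, w (j + (k : Fin m)) = w j by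
    have := H (j' - j).val j
    rw [Fin.cast_val_eq_self, add_sub_cancel] at this
    exact this.symm
  intro k
  induction k with
  | zero => simp
  | succ k ih =>
    intro j
    have h' := h (j + ((k + 1 : ℕ) : Fin m))
    rw [show (j + ((k + 1 : ℕ) : Fin m)) - 1 = j + (k : Fin m) by push_cast; ring] at h'
    rw [← h', ih]

/-- Key step in computing `H^{−2}` of the wheel complex: if `g_1, …, g_m` are monomials with
`gcd(g_1,…,g_m) = 1` (exponent vectors `b j` with `inf_j b j = 0`), the `u_j ∈ S` are nonzero,
and `u_{j−1} g_j = u_j g_{j−1}` cyclically, then `g_j ∣ u_j` for all `j` and, with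
`u = u_1/g_1`, one has `u_j = u · g_j` for all `j`. -/
theorem stmt13 {K : Type*} [Field K] (d m : ℕ) (hm : 2 ≤ m) [NeZero m]
    (b : Fin m → (Fin d →₀ ℕ)) (hgcd : ∀ i : Fin d, ∃ j : Fin m, b j i = 0)
    (u : Fin m → MvPolynomial (Fin d) K) (hu : ∀ j, u j ≠ 0)
    (hrel : ∀ j : Fin m, u (j - 1) * monomial (b j) (1 : K)
      = u j * monomial (b (j - 1)) (1 : K)) :
    (∀ j, monomial (b j) (1 : K) ∣ u j) ∧
      ∃ c : MvPolynomial (Fin d) K, ∀ j, u j = c * monomial (b j) (1 : K) := by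
  have hne : ∀ j, (u j).support.Nonempty := fun j => support_nonempty.mpr (hu j)
  have hdvd : ∀ j, monomial (b j) (1 : K) ∣ u j := by
    intro j
    rw [wheel_mono_dvd_iff]
    intro a ha
    intro i
    -- per-variable minimal exponent
    set ν : Fin m → ℕ := fun j => (u j).support.inf' (hne j) (fun a => a i) with hν
    have hshift : ∀ j : Fin m, ν (j - 1) + b j i = ν j + b (j - 1) i := by
      intro j
      have e1 : (u (j - 1) * monomial (b j) (1 : K)).support.Nonempty := by
        rw [support_nonempty]
        exact mul_ne_zero (hu _) (by simp)
      have h1 := wheel_inf_shift i (b j) (hne (j - 1)) e1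
      have e2 : (u j * monomial (b (j - 1)) (1 : K)).support.Nonempty := by
        rw [support_nonempty]
        exact mul_ne_zero (hu _) (by simp)
      have h2 := wheel_inf_shift i (b (j - 1)) (hne j) e2
      have h3 : (u (j - 1) * monomial (b j) (1 : K)).support.inf' e1 (fun a => a i)
          = (u j * monomial (b (j - 1)) (1 : K)).support.inf' e2 (fun a => a i) := by
        congr 1
        rw [hrel j]
      rw [h1, h2] at h3
      exact h3
    -- the integer w j = ν j - b j i is cyclically constant
    obtain ⟨j0, hj0⟩ := hgcd i
    set w : Fin m → ℤ := fun j => (ν j : ℤ) - (b j i : ℤ) with hw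
    have hconst : ∀ j, w j = w j0 := by
      intro j
      apply wheel_cyclic_const w
      intro j'
      have := hshift j'
      simp only [hw]
      omega
    have hwj : w j = (ν j0 : ℤ) := by rw [hconst j, hw]; simp [hj0]
    have hbν : b j i ≤ ν j := by
      have : (0 : ℤ) ≤ (ν j0 : ℤ) := by positivity
      simp only [hw] at hwj
      omega
    have hνa : ν j ≤ a i := Finset.inf'_le (fun a => a i) ha
    omega
  refine ⟨hdvd, ?_⟩
  choose q hq using hdvd
  have hqc : ∀ j, q (j - 1) = q j := by
    intro j
    have h := hrel j
    rw [hq j, hq (j - 1)] at h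
    have hm1 : (monomial (b (j - 1)) (1 : K)) * (monomial (b j) (1 : K)) ≠ 0 := by
      simp [monomial_mul]
    apply mul_left_cancel₀ hm1
    calc (monomial (b (j - 1)) (1 : K)) * (monomial (b j) (1 : K)) * q (j - 1)
        = monomial (b (j - 1)) (1 : K) * q (j - 1) * monomial (b j) (1 : K) := by ring
      _ = monomial (b j) (1 : K) * q j * monomial (b (j - 1)) (1 : K) := h
      _ = (monomial (b (j - 1)) (1 : K)) * (monomial (b j) (1 : K)) * q j := by ring
  refine ⟨q 0, fun j => ?_⟩
  rw [hq j, wheel_cyclic_const q hqc j 0]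
  ring
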